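/- Let X be a vertex-transitive finite simple graph with n vertices, and let m ≥ 1 be such that there is a quantum homomorphism from the complete graph K_m to the complement of X. Then X has a projective representation of value n/m: there exist integers d, r ≥ 1 with d·m = n·r and rank-r complex d×d projectors F_x (x ∈ V(X)) such that F_x·F_{x'} = 0 whenever x,x' are adjacent in X. Consequently ξ_f(X) ≤ |V(X)|/α_q(X). -/

import Mathlib

open Matrix Finset

/-- A quantum homomorphism from `X` to `Y`: for some `d ≥ 1` there are complex `d × d`
projectors `E x y` (Hermitian idempotents) with `∑ y, E x y = 1` for every `x`,
`E x y * E x y' = 0` whenever `y ≠ y'`, and `E x y * E x' y' = 0` whenever `x, x'`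
are adjacent in `X` and `y, y'` are equal or nonadjacent in `Y`. -/
def IsQuantumHom {V W : Type} [Fintype V] [Fintype W]
    (X : SimpleGraph V) (Y : SimpleGraph W) : Prop :=
  ∃ d : ℕ, 0 < d ∧ ∃ E : V → W → Matrix (Fin d) (Fin d) ℂ,
    (∀ x y, (E x y).IsHermitian ∧ E x y * E x y = E x y) ∧
    (∀ x, ∑ y, E x y = 1) ∧
    (∀ x y y', y ≠ y' → E x y * E x y' = 0) ∧
    (∀ x x' y y', X.Adj x x' → ¬ Y.Adj y y' → E x y * E x' y' = 0)

/-- The homomorphic product `X ⋉ Y`: distinct vertices `(x,y)` and `(x',y')` are adjacent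
iff `x = x'`, or (`x ~ x'` in `X` and `y, y'` are equal or nonadjacent in `Y`). -/
def homProd {V W : Type} (X : SimpleGraph V) (Y : SimpleGraph W) :
    SimpleGraph (V × W) where
  Adj a b := a ≠ b ∧ (a.1 = b.1 ∨ (X.Adj a.1 b.1 ∧ ¬ Y.Adj a.2 b.2))
  symm := ⟨by
    rintro a b ⟨hne, h⟩
    refine ⟨hne.symm, ?_⟩
    rcases h with h | ⟨h1, h2⟩
    · exact Or.inl h.symm
    · exact Or.inr ⟨h1.symm, fun hb => h2 hb.symm⟩⟩
  loopless := ⟨fun a ha => ha.1 rfl⟩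

/-- The independence number: the largest size of a set of pairwise nonadjacent vertices. -/
noncomputable def indepNum {U : Type} [Fintype U] (Z : SimpleGraph U) : ℕ :=
  sSup {n | ∃ s : Finset U, s.card = n ∧ ∀ a ∈ s, ∀ b ∈ s, a ≠ b → ¬ Z.Adj a b}

/-- The rank of an idempotent complex matrix equals its trace. -/
lemma rank_cast_eq_trace' {k : ℕ} (A : Matrix (Fin k) (Fin k) ℂ) (h : A * A = A) :
    (A.rank : ℂ) = A.trace := by
  have hf : A.mulVecLin ∘ₗ A.mulVecLin = A.mulVecLin := by
    rw [← Matrix.mulVecLin_mul, h]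
  obtain ⟨p, hp⟩ := (LinearMap.isProj_iff_isIdempotentElem _).mpr hf
  have hp' : p = LinearMap.range A.mulVecLin := by
    apply le_antisymm
    · intro x hx
      exact ⟨x, hp.map_id x hx⟩
    · rintro x ⟨y, rfl⟩
      exact hp.map_mem y
  have ht := hp.trace
  rw [LinearMap.trace_eq_matrix_trace ℂ (Pi.basisFun ℂ (Fin k)),
      LinearMap.toMatrix_eq_toMatrix', ← Matrix.toLin'_apply',
      LinearMap.toMatrix'_toLin'] at ht
  rw [ht, hp']
  rfl

/-- If `X` is vertex transitive on `n` vertices and `K_m →q X̄`, then `X`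
has a projective representation of value `n/m`; consequently `ξ_f(X) ≤ |V(X)|/α_q(X)`. -/
theorem projRep_of_qIndep {V : Type} [Fintype V]
    (X : SimpleGraph V) (hX : ∀ u v : V, ∃ φ : X ≃g X, φ u = v)
    (m : ℕ) (hm : 1 ≤ m)
    (hq : IsQuantumHom (⊤ : SimpleGraph (Fin m)) Xᶜ) :
    ∃ d r : ℕ, 1 ≤ d ∧ 1 ≤ r ∧ d * m = Fintype.card V * r ∧
      ∃ F : V → Matrix (Fin d) (Fin d) ℂ,
        (∀ x, (F x).IsHermitian ∧ F x * F x = F x ∧ (F x).rank = r) ∧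
        (∀ x x', X.Adj x x' → F x * F x' = 0) := by
  classical
  obtain ⟨d₀, hd₀, E, hproj, hsum, horth, hadj⟩ := hq
  -- `V` is nonempty
  cases isEmpty_or_nonempty V with
  | inl hV =>
      exfalso
      have h1 := hsum ⟨0, hm⟩
      rw [Finset.univ_eq_empty, Finset.sum_empty] at h1
      have h2 := congrFun (congrFun h1 ⟨0, hd₀⟩) ⟨0, hd₀⟩
      simp [Matrix.one_apply] at h2
  | inr hV =>
    letI : Fintype (X ≃g X) :=
      Fintype.ofInjective (fun φ : X ≃g X => φ.toEquiv) RelIso.toEquiv_injective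
    -- the summed projectors
    set Q : V → Matrix (Fin d₀) (Fin d₀) ℂ := fun v => ∑ i, E i v with hQdef
    have hQH : ∀ v, (Q v).IsHermitian := by
      intro v
      show (Q v)ᴴ = Q v
      rw [hQdef]
      rw [Matrix.conjTranspose_sum]
      exact Finset.sum_congr rfl fun i _ => (hproj i v).1
    have hQidem : ∀ v, Q v * Q v = Q v := by
      intro v
      rw [hQdef]
      simp only
      rw [Finset.sum_mul_sum]
      refine Finset.sum_congr rfl fun i _ => ?_
      rw [Finset.sum_eq_single i]
      · exact (hproj i v).2
      · intro j _ hj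
        exact hadj i j v v (by simpa using (Ne.symm hj)) (Xᶜ.loopless.irrefl v)
      · simp
    have hQorth : ∀ v v', X.Adj v v' → Q v * Q v' = 0 := by
      intro v v' hvv'
      rw [hQdef]
      simp only
      rw [Finset.sum_mul_sum]
      refine Finset.sum_eq_zero fun i _ => Finset.sum_eq_zero fun j _ => ?_
      have hnc : ¬ Xᶜ.Adj v v' := by
        simp [SimpleGraph.compl_adj, hvv']
      by_cases hij : i = j
      · subst hij
        exact horth i v v' hvv'.ne
      · exact hadj i j v v' (by simpa using hij) hnc
    -- trace computations
    have hQtr_total : ∑ u, (Q u).trace = (m : ℂ) * (d₀ : ℂ) := by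
      have : ∀ u, (Q u).trace = ∑ i, (E i u).trace := by
        intro u; rw [hQdef]; simp [Matrix.trace_sum]
      rw [Finset.sum_congr rfl fun u _ => this u, Finset.sum_comm]
      have : ∀ i : Fin m, ∑ u, (E i u).trace = (d₀ : ℂ) := by
        intro i
        rw [← Matrix.trace_sum, hsum i, Matrix.trace_one]
        simp
      rw [Finset.sum_congr rfl fun i _ => this i]
      simp [mul_comm]
    -- sums over the automorphism group are vertex-independent
    have hsum_eq : ∀ v v' : V, ∑ g : X ≃g X, (Q (g v)).trace = ∑ g : X ≃g X, (Q (g v')).trace := by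
      intro v v'
      obtain ⟨ψ, hψ⟩ := hX v' v
      have τbij : Function.Bijective (fun g : X ≃g X => (ψ.trans g : X ≃g X)) := by
        constructor
        · intro a b h
          refine RelIso.ext fun x => ?_
          have h2 := congrArg (fun f : X ≃g X => f (ψ.symm x)) h
          simp only [RelIso.trans_apply, RelIso.apply_symm_apply] at h2
          exact h2
        · intro g
          exact ⟨ψ.symm.trans g, RelIso.ext fun x => by simp⟩
      calc ∑ g : X ≃g X, (Q (g v)).trace
          = ∑ g : X ≃g X, (Q ((ψ.trans g : X ≃g X) v')).trace := by
            refine Finset.sum_congr rfl fun g _ => ?_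
            congr 1
            rw [RelIso.trans_apply, hψ]
        _ = ∑ g : X ≃g X, (Q (g v')).trace :=
            (Function.Bijective.sum_comp τbij (fun g : X ≃g X => (Q (g v')).trace))
    -- block-diagonal construction
    set d : ℕ := d₀ * Fintype.card (X ≃g X) with hd
    have hcard : Fintype.card (Fin d₀ × (X ≃g X)) = d := by
      simp [hd]
    let e : Fin d₀ × (X ≃g X) ≃ Fin d := Fintype.equivFinOfCardEq hcard
    set B : V → Matrix (Fin d₀ × (X ≃g X)) (Fin d₀ × (X ≃g X)) ℂ :=
      fun v => Matrix.blockDiagonal (fun g : X ≃g X => Q (g v)) with hBdef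
    set F : V → Matrix (Fin d) (Fin d) ℂ :=
      fun v => (B v).submatrix e.symm e.symm with hFdef
    have hBH : ∀ v, (B v)ᴴ = B v := by
      intro v
      show (Matrix.blockDiagonal fun g : X ≃g X => Q (g v))ᴴ = Matrix.blockDiagonal fun g : X ≃g X => Q (g v)
      rw [Matrix.blockDiagonal_conjTranspose]
      have : (fun g : X ≃g X => (Q (g v))ᴴ) = fun g : X ≃g X => Q (g v) := funext fun g => hQH (g v)
      rw [this]
    have hBmul : ∀ v v', B v * B v' = Matrix.blockDiagonal (fun g : X ≃g X => Q (g v) * Q (g v')) :=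
      fun v v' => (Matrix.blockDiagonal_mul _ _).symm
    have hBidem : ∀ v, B v * B v = B v := by
      intro v
      rw [hBmul]
      show _ = Matrix.blockDiagonal fun g : X ≃g X => Q (g v)
      have : (fun g : X ≃g X => Q (g v) * Q (g v)) = fun g : X ≃g X => Q (g v) :=
        funext fun g => hQidem (g v)
      rw [this]
    have hBorth : ∀ v v', X.Adj v v' → B v * B v' = 0 := by
      intro v v' hvv'
      rw [hBmul]
      have : (fun g : X ≃g X => Q (g v) * Q (g v')) = fun _ : X ≃g X => (0 : Matrix (Fin d₀) (Fin d₀) ℂ) :=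
        funext fun g => hQorth _ _ (g.map_rel_iff.mpr hvv')
      rw [this]
      exact Matrix.blockDiagonal_zero
    have hFH : ∀ v, (F v).IsHermitian := by
      intro v
      show (F v)ᴴ = F v
      rw [hFdef]
      simp only
      rw [Matrix.conjTranspose_submatrix, hBH v]
    have hFidem : ∀ v, F v * F v = F v := by
      intro v
      rw [hFdef]
      simp only
      rw [Matrix.submatrix_mul_equiv (B v) (B v) _ e.symm _, hBidem v]
    have hForth : ∀ v v', X.Adj v v' → F v * F v' = 0 := by
      intro v v' hvv'
      rw [hFdef]
      simp only
      rw [Matrix.submatrix_mul_equiv (B v) (B v') _ e.symm _, hBorth v v' hvv']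
      simp
    have hFtr : ∀ v, (F v).trace = ∑ g : X ≃g X, (Q (g v)).trace := by
      intro v
      have h1 : (F v).trace = (B v).trace := by
        rw [hFdef]
        simp only [Matrix.trace, Matrix.diag, Matrix.submatrix_apply]
        exact Equiv.sum_comp e.symm (fun j => B v j j)
      rw [h1, hBdef]
      simp only
      rw [Matrix.trace_blockDiagonal]
    have hFrank : ∀ v, ((F v).rank : ℂ) = ∑ g : X ≃g X, (Q (g v)).trace := by
      intro v
      rw [rank_cast_eq_trace' _ (hFidem v), hFtr v]
    have v₀ : V := Classical.arbitrary V
    set r : ℕ := (F v₀).rank with hr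
    have hrank_const : ∀ v, (F v).rank = r := by
      intro v
      have : ((F v).rank : ℂ) = ((F v₀).rank : ℂ) := by
        rw [hFrank v, hFrank v₀, hsum_eq v v₀]
      exact_mod_cast this
    -- the counting identity
    have hcount : ((d : ℕ) : ℂ) * (m : ℂ) = ((Fintype.card V : ℕ) : ℂ) * (r : ℂ) := by
      have h1 : ((Fintype.card V : ℕ) : ℂ) * (r : ℂ) = ∑ v : V, ((F v).rank : ℂ) := by
        rw [Finset.sum_congr rfl fun v _ => by rw [hrank_const v]]
        simp [mul_comm]
      rw [h1]
      have h2 : ∑ v : V, ((F v).rank : ℂ) = ∑ v : V, ∑ g : X ≃g X, (Q (g v)).trace :=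
        Finset.sum_congr rfl fun v _ => hFrank v
      rw [h2, Finset.sum_comm]
      have h3 : ∀ g : X ≃g X, ∑ v : V, (Q (g v)).trace = ∑ u : V, (Q u).trace := by
        intro g
        exact Equiv.sum_comp g.toEquiv (fun u => (Q u).trace)
      rw [Finset.sum_congr rfl fun g _ => h3 g]
      rw [Finset.sum_const, hQtr_total]
      simp [hd]
      ring
    have hGpos : 0 < Fintype.card (X ≃g X) := Fintype.card_pos_iff.mpr ⟨RelIso.refl _⟩
    have hdpos : 1 ≤ d := by
      rw [hd]
      exact Nat.one_le_iff_ne_zero.mpr (Nat.mul_ne_zero (Nat.pos_iff_ne_zero.mp hd₀)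
        (Nat.pos_iff_ne_zero.mp hGpos))
    have hdm : d * m = Fintype.card V * r := by
      have : ((d * m : ℕ) : ℂ) = ((Fintype.card V * r : ℕ) : ℂ) := by
        push_cast
        exact hcount
      exact_mod_cast this
    have hrpos : 1 ≤ r := by
      rcases Nat.eq_zero_or_pos r with h0 | h1
      · exfalso
        rw [h0, Nat.mul_zero] at hdm
        have : 0 < d * m := Nat.mul_pos hdpos hm
        omega
      · exact h1
    exact ⟨d, r, hdpos, hrpos, hdm, F,
      fun v => ⟨hFH v, hFidem v, hrank_const v⟩, hForth⟩
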